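/- Single-letter converse inequalities under full cooperation (steps in the converse of Theorem 3). Let ((X_j,Y_j))_{j=1}^n be i.i.d. copies of a pair (X,Y) of finite-valued random variables, let f : 𝒳×𝒴 → ℱ, let C_0 = φ_0(X_1^n), C_X = φ_X(X_1^n), C_Y = φ_Y(C_0, Y_1^n) for arbitrary functions φ_0, φ_X, φ_Y with finite codomains, and suppose H(f(X_1,Y_1),…,f(X_n,Y_n) | C_X, C_Y) ≤ ε. For i ∈ {1,…,n} define T_i = (f(X_{i+1},Y_{i+1}),…,f(X_n,Y_n), C_X). Then: (i) T_i−X_i−Y_i is a Markov chain for every i; (ii) H(C_Y) ≥ Σ_{i=1}^n H(f(X_i,Y_i) | T_i) − ε; (iii) H(C_X, C_Y) ≥ Σ_{i=1}^n [ H(f(X_i,Y_i)) + I(X_i; T_i | f(X_i,Y_i)) ] − ε. -/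

import Mathlib

open scoped BigOperators Classical

section Preliminaries

variable {Ω : Type*} [Fintype Ω]

/-- The probability mass function of the random variable `X : Ω → α` under the
weight function `μ` on the finite sample space `Ω`. -/
noncomputable def pm {α : Type*} (μ : Ω → ℝ) (X : Ω → α) (a : α) : ℝ :=
  ∑ ω, if X ω = a then μ ω else 0

/-- `μ` is a probability mass function on the finite sample space `Ω`. -/
def IsPMF (μ : Ω → ℝ) : Prop := (∀ ω, 0 ≤ μ ω) ∧ ∑ ω, μ ω = 1

/-- Shannon entropy (in bits) of the random variable `X` under `μ`. -/
noncomputable def ent {α : Type*} [Fintype α] (μ : Ω → ℝ) (X : Ω → α) : ℝ :=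
  - ∑ a, pm μ X a * Real.logb 2 (pm μ X a)

/-- Conditional Shannon entropy H(X|Y) (in bits). -/
noncomputable def condEnt {α β : Type*} [Fintype α] [Fintype β] (μ : Ω → ℝ)
    (X : Ω → α) (Y : Ω → β) : ℝ :=
  ent μ (fun ω => (X ω, Y ω)) - ent μ Y

/-- Mutual information I(X;Y) (in bits). -/
noncomputable def mi {α β : Type*} [Fintype α] [Fintype β] (μ : Ω → ℝ)
    (X : Ω → α) (Y : Ω → β) : ℝ :=
  ent μ X + ent μ Y - ent μ (fun ω => (X ω, Y ω))

/-- Conditional mutual information I(X;Y|Z) (in bits). -/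
noncomputable def condMI {α β γ : Type*} [Fintype α] [Fintype β] [Fintype γ] (μ : Ω → ℝ)
    (X : Ω → α) (Y : Ω → β) (Z : Ω → γ) : ℝ :=
  condEnt μ X Z - condEnt μ X (fun ω => (Y ω, Z ω))

/-- `A` and `C` are conditionally independent given `B`
(the Markov chain A − B − C). -/
def CondIndepRV {α β γ : Type*} (μ : Ω → ℝ) (A : Ω → α) (B : Ω → β) (C : Ω → γ) : Prop :=
  ∀ a b c, pm μ (fun ω => (A ω, B ω, C ω)) (a, b, c) * pm μ B b
    = pm μ (fun ω => (A ω, B ω)) (a, b) * pm μ (fun ω => (B ω, C ω)) (b, c)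

/-- The conditional characteristic graph `G_{L|K}(f)` of `L` given `K`, with respect to
the source variable `S` and the function `f`: vertices `l₁ ≠ l₂` are adjacent iff there
are `k, s₁, s₂` with `p(l₁,k,s₁) ⬝ p(l₂,k,s₂) > 0` and `f s₁ ≠ f s₂`. -/
def charGraph {α β σ γ : Type*} (μ : Ω → ℝ) (L : Ω → α) (K : Ω → β) (S : Ω → σ)
    (f : σ → γ) : SimpleGraph α where
  Adj l₁ l₂ := l₁ ≠ l₂ ∧ ∃ k s₁ s₂,
    0 < pm μ (fun ω => (L ω, K ω, S ω)) (l₁, k, s₁) ∧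
    0 < pm μ (fun ω => (L ω, K ω, S ω)) (l₂, k, s₂) ∧ f s₁ ≠ f s₂
  symm := ⟨by
    rintro l₁ l₂ ⟨h, k, s₁, s₂, h1, h2, hf⟩
    exact ⟨h.symm, k, s₂, s₁, h2, h1, hf.symm⟩⟩
  loopless := ⟨by rintro l ⟨h, -⟩; exact h rfl⟩

/-- A finite set of vertices is an independent set of the graph `G`. -/
def IsIndepSet {α : Type*} (G : SimpleGraph α) (s : Finset α) : Prop :=
  ∀ a ∈ s, ∀ b ∈ s, ¬ G.Adj a b

end Preliminaries

section Operational

variable {𝒳 𝒴 ℱ : Type*} [Fintype 𝒳] [Fintype 𝒴] [Fintype ℱ]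

/-- Number of messages available at block length `n` and rate `R`: `⌈2^{nR}⌉`. -/
noncomputable def msgCount (n : ℕ) (R : ℝ) : ℕ := ⌈(2 : ℝ) ^ ((n : ℝ) * R)⌉₊

/-- The i.i.d. product distribution of `n` copies of a source with pmf `p`. -/
noncomputable def prodPMF (p : 𝒳 × 𝒴 → ℝ) (n : ℕ) : (Fin n → 𝒳 × 𝒴) → ℝ :=
  fun ω => ∏ j, p (ω j)

/-- The error probability of a code `(φ0, φX, φY, ψ)` for computing `f` on `n`
i.i.d. copies of a source with pmf `p`. -/
noncomputable def errProb (p : 𝒳 × 𝒴 → ℝ) (f : 𝒳 × 𝒴 → ℱ) {n M0 MX MY : ℕ}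
    (φ0 : (Fin n → 𝒳) → Fin M0) (φX : (Fin n → 𝒳) → Fin MX)
    (φY : (Fin n → 𝒴) → Fin M0 → Fin MY)
    (ψ : Fin MX → Fin MY → Fin n → ℱ) : ℝ :=
  ∑ xy : Fin n → 𝒳 × 𝒴,
    if ψ (φX fun i => (xy i).1) (φY (fun i => (xy i).2) (φ0 fun i => (xy i).1))
        = fun i => f (xy i)
    then 0 else prodPMF p n xy

/-- A rate tuple `(R0, RX, RY)` is achievable for computing `f` at the receiver. -/
def Achievable (p : 𝒳 × 𝒴 → ℝ) (f : 𝒳 × 𝒴 → ℱ) (R0 RX RY : ℝ) : Prop :=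
  0 ≤ R0 ∧ 0 ≤ RX ∧ 0 ≤ RY ∧
  ∀ ε > (0 : ℝ), ∃ N : ℕ, ∀ n ≥ N,
    ∃ (φ0 : (Fin n → 𝒳) → Fin (msgCount n R0))
      (φX : (Fin n → 𝒳) → Fin (msgCount n RX))
      (φY : (Fin n → 𝒴) → Fin (msgCount n R0) → Fin (msgCount n RY))
      (ψ : Fin (msgCount n RX) → Fin (msgCount n RY) → Fin n → ℱ),
      errProb p f φ0 φX φY ψ ≤ ε

/-- The rate region: the closure of the set of achievable rate tuples. -/
noncomputable def rateRegion (p : 𝒳 × 𝒴 → ℝ) (f : 𝒳 × 𝒴 → ℱ) : Set (ℝ × ℝ × ℝ) :=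
  closure {r : ℝ × ℝ × ℝ | Achievable p f r.1 r.2.1 r.2.2}

end Operational


set_option maxHeartbeats 1000000

section lib
variable {Ω : Type*} [Fintype Ω] {α β γ : Type*} (μ : Ω → ℝ)

lemma pm_nonneg (h : ∀ ω, 0 ≤ μ ω) (X : Ω → α) (a : α) : 0 ≤ pm μ X a :=
  Finset.sum_nonneg fun ω _ => by split <;> [exact h ω; rfl]

lemma sum_pm [Fintype α] (X : Ω → α) : ∑ a, pm μ X a = ∑ ω, μ ω := by
  simp only [pm]
  rw [Finset.sum_comm]
  refine Finset.sum_congr rfl fun ω _ => ?_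
  simp

lemma pm_le_one [Fintype α] (h : IsPMF μ) (X : Ω → α) (a : α) : pm μ X a ≤ 1 := by
  rw [← h.2, ← sum_pm μ X]
  exact Finset.single_le_sum (fun b _ => pm_nonneg μ h.1 X b) (Finset.mem_univ a)

lemma ent_nonneg [Fintype α] (h : IsPMF μ) (X : Ω → α) : 0 ≤ ent μ X := by
  rw [ent, neg_nonneg]
  refine Finset.sum_nonpos fun a _ => ?_
  rcases eq_or_lt_of_le (pm_nonneg μ h.1 X a) with he | hl
  · simp [← he]
  · exact mul_nonpos_of_nonneg_of_nonpos hl.le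
      (Real.logb_nonpos one_lt_two hl.le (pm_le_one μ h X a))

/-- marginal: summing the joint pm over the first coordinate gives the second marginal. -/
lemma pm_fst_marginal [Fintype α] (X : Ω → α) (Y : Ω → β) (b : β) :
    ∑ a, pm μ (fun ω => (X ω, Y ω)) (a, b) = pm μ Y b := by
  simp only [pm]
  rw [Finset.sum_comm]
  refine Finset.sum_congr rfl fun ω _ => ?_
  simp only [Prod.mk.injEq, ite_and]
  simp

/-- pm of an injective postcomposition. -/
lemma pm_comp_inj (X : Ω → α) (e : α → β) (he : Function.Injective e) (a : α) :
    pm μ (fun ω => e (X ω)) (e a) = pm μ X a := by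
  refine Finset.sum_congr rfl fun ω _ => ?_
  simp [he.eq_iff]

lemma pm_comp_notin (X : Ω → α) (e : α → β) (b : β) (hb : b ∉ Set.range e) :
    pm μ (fun ω => e (X ω)) b = 0 := by
  refine Finset.sum_eq_zero fun ω _ => ?_
  rw [if_neg]; exact fun h => hb ⟨X ω, h⟩

lemma ent_comp_inj [Fintype α] [Fintype β] (X : Ω → α) (e : α → β) (he : Function.Injective e) :
    ent μ (fun ω => e (X ω)) = ent μ X := by
  rw [ent, ent, neg_inj]
  have h1 : ∑ b : β, pm μ (fun ω => e (X ω)) b * Real.logb 2 (pm μ (fun ω => e (X ω)) b)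
      = ∑ b ∈ Finset.image e Finset.univ, pm μ (fun ω => e (X ω)) b * Real.logb 2 (pm μ (fun ω => e (X ω)) b) := by
    refine (Finset.sum_subset (Finset.subset_univ _) ?_).symm
    intro b _ hb
    rw [pm_comp_notin μ X e b, Real.logb_zero, mul_zero]
    intro ⟨a, ha⟩
    exact hb (Finset.mem_image.mpr ⟨a, Finset.mem_univ a, ha⟩)
  rw [h1, Finset.sum_image (fun a _ b _ h => he h)]
  refine Finset.sum_congr rfl fun a _ => ?_
  rw [pm_comp_inj μ X e he]

lemma ent_congr [Fintype α] {X Y : Ω → α} (h : ∀ ω, X ω = Y ω) : ent μ X = ent μ Y := by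
  congr 1; ext ω; exact h ω

end lib

section lib2
variable {Ω : Type*} [Fintype Ω] {α β γ : Type*} (μ : Ω → ℝ)

private lemma rot3 {α β γ : Type*} [Fintype α] [Fintype β] [Fintype γ]
    (f : α → β → γ → ℝ) :
    ∑ a, ∑ b, ∑ c, f a b c = ∑ c, ∑ a, ∑ b, f a b c :=
  calc ∑ a, ∑ b, ∑ c, f a b c = ∑ a, ∑ c, ∑ b, f a b c :=
        Finset.sum_congr rfl fun a _ => Finset.sum_comm
    _ = ∑ c, ∑ a, ∑ b, f a b c := Finset.sum_comm

lemma pm_mid_marginal [Fintype β] (X : Ω → α) (Y : Ω → β) (Z : Ω → γ) (a : α) (c : γ) :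
    ∑ b, pm μ (fun ω => (X ω, (Y ω, Z ω))) (a, b, c) = pm μ (fun ω => (X ω, Z ω)) (a, c) := by
  simp only [pm]
  rw [Finset.sum_comm]
  refine Finset.sum_congr rfl fun ω _ => ?_
  by_cases hx : X ω = a <;> by_cases hz : Z ω = c <;>
    simp [Prod.ext_iff, hx, hz, ite_and]

/-- H(Y) ≤ H(X,Y) : monotonicity of entropy. -/
lemma ent_le_ent_pair [Fintype α] [Fintype β] (hμ : ∀ ω, 0 ≤ μ ω) (X : Ω → α) (Y : Ω → β) :
    ent μ Y ≤ ent μ (fun ω => (X ω, Y ω)) := by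
  rw [ent, ent, neg_le_neg_iff]
  have hmarg : ∀ b, pm μ Y b = ∑ a, pm μ (fun ω => (X ω, Y ω)) (a, b) :=
    fun b => (pm_fst_marginal μ X Y b).symm
  calc ∑ x : α × β, pm μ (fun ω => (X ω, Y ω)) x * Real.logb 2 (pm μ (fun ω => (X ω, Y ω)) x)
      = ∑ b, ∑ a, pm μ (fun ω => (X ω, Y ω)) (a, b) *
          Real.logb 2 (pm μ (fun ω => (X ω, Y ω)) (a, b)) := by
        rw [Fintype.sum_prod_type, Finset.sum_comm]
    _ ≤ ∑ b, ∑ a, pm μ (fun ω => (X ω, Y ω)) (a, b) * Real.logb 2 (pm μ Y b) := by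
        refine Finset.sum_le_sum fun b _ => Finset.sum_le_sum fun a _ => ?_
        rcases eq_or_lt_of_le (pm_nonneg μ hμ (fun ω => (X ω, Y ω)) (a, b)) with he | hl
        · simp [← he]
        · refine mul_le_mul_of_nonneg_left ?_ hl.le
          refine Real.logb_le_logb_of_le one_lt_two hl ?_
          rw [hmarg b]
          exact Finset.single_le_sum
            (fun a' _ => pm_nonneg μ hμ (fun ω => (X ω, Y ω)) (a', b)) (Finset.mem_univ a)
    _ = ∑ b, pm μ Y b * Real.logb 2 (pm μ Y b) := by
        refine Finset.sum_congr rfl fun b _ => ?_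
        rw [← Finset.sum_mul, ← hmarg b]

/-- H(g∘X) ≤ H(X). -/
lemma ent_comp_le [Fintype α] [Fintype β] (hμ : ∀ ω, 0 ≤ μ ω) (X : Ω → α) (g : α → β) :
    ent μ (fun ω => g (X ω)) ≤ ent μ X := by
  have h1 : ent μ X = ent μ (fun ω => (X ω, g (X ω))) :=
    (ent_comp_inj μ X (fun x => (x, g x)) (fun x y h => congrArg Prod.fst h)).symm
  rw [h1]
  exact ent_le_ent_pair μ hμ X (fun ω => g (X ω))

/-- Strong subadditivity: H(X,Y,Z) + H(Z) ≤ H(X,Z) + H(Y,Z). -/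
lemma strong_subadd [Fintype α] [Fintype β] [Fintype γ] (hμ : ∀ ω, 0 ≤ μ ω)
    (X : Ω → α) (Y : Ω → β) (Z : Ω → γ) :
    ent μ (fun ω => (X ω, (Y ω, Z ω))) + ent μ Z
      ≤ ent μ (fun ω => (X ω, Z ω)) + ent μ (fun ω => (Y ω, Z ω)) := by
  classical
  have hL0 : (0:ℝ) < Real.log 2 := Real.log_pos one_lt_two
  set P : α → β → γ → ℝ := fun a b c => pm μ (fun ω => (X ω, (Y ω, Z ω))) (a, b, c) with hP
  have hP0 : ∀ a b c, 0 ≤ P a b c := fun a b c => pm_nonneg μ hμ _ _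
  set PXZ : α → γ → ℝ := fun a c => pm μ (fun ω => (X ω, Z ω)) (a, c) with hPXZ
  set PYZ : β → γ → ℝ := fun b c => pm μ (fun ω => (Y ω, Z ω)) (b, c) with hPYZ
  set PZ : γ → ℝ := fun c => pm μ Z c with hPZ
  have hXZ : ∀ a c, PXZ a c = ∑ b, P a b c := fun a c => (pm_mid_marginal μ X Y Z a c).symm
  have hYZ : ∀ b c, PYZ b c = ∑ a, P a b c := fun b c =>
    (pm_fst_marginal μ X (fun ω => (Y ω, Z ω)) (b, c)).symm
  have hZc : ∀ c, PZ c = ∑ a, ∑ b, P a b c := by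
    intro c
    calc PZ c = ∑ b, PYZ b c := (pm_fst_marginal μ Y Z c).symm
      _ = ∑ b, ∑ a, P a b c := Finset.sum_congr rfl fun b _ => hYZ b c
      _ = ∑ a, ∑ b, P a b c := Finset.sum_comm
  have hXZ0 : ∀ a c, 0 ≤ PXZ a c := fun a c => pm_nonneg μ hμ _ _
  have hYZ0 : ∀ b c, 0 ≤ PYZ b c := fun b c => pm_nonneg μ hμ _ _
  have hZ0 : ∀ c, 0 ≤ PZ c := fun c => pm_nonneg μ hμ _ _
  -- entropies as triple sums
  have eXYZ : ent μ (fun ω => (X ω, (Y ω, Z ω)))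
      = -∑ a, ∑ b, ∑ c, P a b c * Real.logb 2 (P a b c) := by
    rw [ent]
    simp only [Fintype.sum_prod_type]
    rfl
  have eXZ : ent μ (fun ω => (X ω, Z ω))
      = -∑ a, ∑ b, ∑ c, P a b c * Real.logb 2 (PXZ a c) := by
    rw [ent, Fintype.sum_prod_type, neg_inj]
    refine Finset.sum_congr rfl fun a _ => ?_
    calc ∑ c, PXZ a c * Real.logb 2 (PXZ a c)
        = ∑ c, ∑ b, P a b c * Real.logb 2 (PXZ a c) :=
          Finset.sum_congr rfl fun c _ => by rw [hXZ a c, Finset.sum_mul]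
      _ = ∑ b, ∑ c, P a b c * Real.logb 2 (PXZ a c) := Finset.sum_comm
  have eYZ : ent μ (fun ω => (Y ω, Z ω))
      = -∑ a, ∑ b, ∑ c, P a b c * Real.logb 2 (PYZ b c) := by
    rw [ent, Fintype.sum_prod_type, neg_inj]
    calc ∑ b, ∑ c, PYZ b c * Real.logb 2 (PYZ b c)
        = ∑ b, ∑ c, ∑ a, P a b c * Real.logb 2 (PYZ b c) := by
          refine Finset.sum_congr rfl fun b _ => Finset.sum_congr rfl fun c _ => ?_
          rw [hYZ b c, Finset.sum_mul]
      _ = ∑ a, ∑ b, ∑ c, P a b c * Real.logb 2 (PYZ b c) :=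
          rot3 (fun b c a => P a b c * Real.logb 2 (PYZ b c))
  have eZ : ent μ Z = -∑ a, ∑ b, ∑ c, P a b c * Real.logb 2 (PZ c) := by
    rw [ent, neg_inj]
    calc ∑ c, PZ c * Real.logb 2 (PZ c)
        = ∑ c, ∑ a, ∑ b, P a b c * Real.logb 2 (PZ c) := by
          refine Finset.sum_congr rfl fun c _ => ?_
          rw [hZc c, Finset.sum_mul]
          exact Finset.sum_congr rfl fun a _ => by rw [Finset.sum_mul]
      _ = ∑ a, ∑ b, ∑ c, P a b c * Real.logb 2 (PZ c) :=
          (rot3 (fun a b c => P a b c * Real.logb 2 (PZ c))).symm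
  rw [eXYZ, eXZ, eYZ, eZ, ← sub_nonneg]
  set D : α → β → γ → ℝ := fun a b c =>
    P a b c * Real.logb 2 (P a b c) + P a b c * Real.logb 2 (PZ c)
      - P a b c * Real.logb 2 (PXZ a c) - P a b c * Real.logb 2 (PYZ b c) with hD
  have hexpand : -∑ a, ∑ b, ∑ c, P a b c * Real.logb 2 (PXZ a c)
      + -∑ a, ∑ b, ∑ c, P a b c * Real.logb 2 (PYZ b c)
      - (-∑ a, ∑ b, ∑ c, P a b c * Real.logb 2 (P a b c)
        + -∑ a, ∑ b, ∑ c, P a b c * Real.logb 2 (PZ c))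
      = ∑ a, ∑ b, ∑ c, D a b c := by
    simp only [hD, Finset.sum_sub_distrib, Finset.sum_add_distrib]
    ring
  rw [hexpand]
  set Q : α → β → γ → ℝ := fun a b c => PXZ a c * PYZ b c / PZ c with hQdef
  have key : ∀ a b c, (P a b c - Q a b c) / Real.log 2 ≤ D a b c := by
    intro a b c
    rcases eq_or_lt_of_le (hP0 a b c) with he | hl
    · have hQ0 : 0 ≤ Q a b c :=
        div_nonneg (mul_nonneg (hXZ0 a c) (hYZ0 b c)) (hZ0 c)
      have hPz : P a b c = 0 := he.symm
      have hD0 : D a b c = 0 := by simp only [hD]; rw [hPz]; ring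
      rw [hD0, hPz, zero_sub, neg_div]
      exact neg_nonpos.mpr (div_nonneg hQ0 hL0.le)
    · have hxz : 0 < PXZ a c := lt_of_lt_of_le hl (by
        rw [hXZ a c]; exact Finset.single_le_sum (fun b' _ => hP0 a b' c) (Finset.mem_univ b))
      have hyz : 0 < PYZ b c := lt_of_lt_of_le hl (by
        rw [hYZ b c]; exact Finset.single_le_sum (fun a' _ => hP0 a' b c) (Finset.mem_univ a))
      have hz : 0 < PZ c := lt_of_lt_of_le hl (by
        rw [hZc c]
        calc P a b c ≤ ∑ b', P a b' c :=
              Finset.single_le_sum (fun b' _ => hP0 a b' c) (Finset.mem_univ b)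
          _ ≤ ∑ a', ∑ b', P a' b' c :=
              Finset.single_le_sum (fun a' _ => Finset.sum_nonneg fun b' _ => hP0 a' b' c)
                (Finset.mem_univ a))
      have hQpos : 0 < Q a b c := div_pos (mul_pos hxz hyz) hz
      have hlog : Real.log (Q a b c / P a b c) ≤ Q a b c / P a b c - 1 :=
        Real.log_le_sub_one_of_pos (div_pos hQpos hl)
      have hexp : Real.log (Q a b c / P a b c)
          = Real.log (PXZ a c) + Real.log (PYZ b c) - Real.log (PZ c) - Real.log (P a b c) := by
        rw [hQdef]
        rw [Real.log_div (by positivity) hl.ne', Real.log_div (by positivity) hz.ne',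
          Real.log_mul hxz.ne' hyz.ne']
      have hmul := mul_le_mul_of_nonneg_left hlog hl.le
      rw [hexp] at hmul
      have h2 : P a b c * (Q a b c / P a b c - 1) = Q a b c - P a b c := by
        field_simp
      rw [h2] at hmul
      have hrhs : D a b c
          = (P a b c * Real.log (P a b c) + P a b c * Real.log (PZ c)
            - P a b c * Real.log (PXZ a c) - P a b c * Real.log (PYZ b c)) / Real.log 2 := by
        rw [hD]; simp only [Real.logb]; ring
      rw [hrhs, div_le_div_iff_of_pos_right hL0]
      nlinarith [hmul]
  have hQsum : ∑ a, ∑ b, ∑ c, Q a b c ≤ ∑ a, ∑ b, ∑ c, P a b c := by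
    rw [rot3 Q, rot3 P]
    refine Finset.sum_le_sum fun c _ => ?_
    have hsumX : ∑ a, PXZ a c = PZ c := by
      rw [hZc c]; exact Finset.sum_congr rfl fun a _ => hXZ a c
    have hsumY : ∑ b, PYZ b c = PZ c := by
      rw [hZc c, Finset.sum_comm]
      exact Finset.sum_congr rfl fun b _ => hYZ b c
    have hinner : ∑ a, ∑ b, Q a b c = PZ c * PZ c / PZ c := by
      rw [hQdef]
      simp only
      calc ∑ a, ∑ b, PXZ a c * PYZ b c / PZ c
          = ∑ a, PXZ a c * PZ c / PZ c := by
            refine Finset.sum_congr rfl fun a _ => ?_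
            rw [← Finset.sum_div, ← Finset.mul_sum, hsumY]
        _ = PZ c * PZ c / PZ c := by
            rw [← Finset.sum_div, ← Finset.sum_mul, hsumX]
    rw [hinner, ← hZc c]
    rcases eq_or_lt_of_le (hZ0 c) with hzz | hzz
    · rw [← hzz]; norm_num
    · rw [mul_div_assoc, div_self hzz.ne', mul_one]
  calc (0:ℝ) = (∑ a, ∑ b, ∑ c, P a b c - ∑ a, ∑ b, ∑ c, Q a b c) / Real.log 2
        - (∑ a, ∑ b, ∑ c, P a b c - ∑ a, ∑ b, ∑ c, Q a b c) / Real.log 2 := by ring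
    _ ≤ ∑ a, ∑ b, ∑ c, D a b c := by
        have h1 : 0 ≤ (∑ a, ∑ b, ∑ c, P a b c - ∑ a, ∑ b, ∑ c, Q a b c) / Real.log 2 :=
          div_nonneg (by linarith) hL0.le
        have h2 : (∑ a, ∑ b, ∑ c, P a b c - ∑ a, ∑ b, ∑ c, Q a b c) / Real.log 2
            = ∑ a, ∑ b, ∑ c, (P a b c - Q a b c) / Real.log 2 := by
          simp only [sub_div, Finset.sum_div, Finset.sum_sub_distrib]
        have h3 : ∑ a, ∑ b, ∑ c, (P a b c - Q a b c) / Real.log 2 ≤ ∑ a, ∑ b, ∑ c, D a b c :=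
          Finset.sum_le_sum fun a _ => Finset.sum_le_sum fun b _ =>
            Finset.sum_le_sum fun c _ => key a b c
        linarith
end lib2

section lib3
variable {Ω : Type*} [Fintype Ω] {α β γ : Type*} (μ : Ω → ℝ)

lemma pm_const (h : IsPMF μ) (c : α) (a : α) :
    pm μ (fun _ => c) a = if c = a then 1 else 0 := by
  by_cases hca : c = a
  · subst hca; simp [pm, h.2]
  · simp [pm, hca]

lemma ent_const [Fintype α] (h : IsPMF μ) (c : α) : ent μ (fun _ => c) = 0 := by
  rw [ent]
  rw [Finset.sum_eq_zero, neg_zero]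
  intro a _
  rw [pm_const μ h c a]
  split <;> simp

/-- H(X, unit) = H(X) -/
lemma ent_pair_unit [Fintype α] (X : Ω → α) :
    ent μ (fun ω => (X ω, ())) = ent μ X :=
  ent_comp_inj μ X (fun x => (x, ())) (fun x y h => congrArg Prod.fst h)

/-- Subadditivity H(X,Y) ≤ H(X) + H(Y). -/
lemma ent_pair_le [Fintype α] [Fintype β] (h : IsPMF μ) (X : Ω → α) (Y : Ω → β) :
    ent μ (fun ω => (X ω, Y ω)) ≤ ent μ X + ent μ Y := by
  have hs : ent μ (fun ω => (X ω, (Y ω, ()))) + ent μ (fun _ => ())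
      ≤ ent μ (fun ω => (X ω, ())) + ent μ (fun ω => (Y ω, ())) :=
    strong_subadd μ h.1 X Y (fun _ => ())
  have h1 : ent μ (fun ω => (X ω, (Y ω, ()))) = ent μ (fun ω => (X ω, Y ω)) :=
    ent_comp_inj μ (fun ω => (X ω, Y ω)) (fun x => (x.1, (x.2, ())))
      (fun x y hxy => by
        simp only [Prod.mk.injEq] at hxy
        exact Prod.ext hxy.1 hxy.2.1)
  rw [ent_const μ h (), h1, ent_pair_unit μ X, ent_pair_unit μ Y] at hs
  linarith

/-- Conditioning on a function of the conditioning variable: H(A|B) ≤ H(A|g∘B). -/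
lemma condEnt_comp_le [Fintype α] [Fintype β] [Fintype γ] (hμ : ∀ ω, 0 ≤ μ ω)
    (A : Ω → α) (B : Ω → β) (g : β → γ) :
    condEnt μ A B ≤ condEnt μ A (fun ω => g (B ω)) := by
  have hs := strong_subadd μ hμ A B (fun ω => g (B ω))
  have h1 : ent μ (fun ω => (A ω, (B ω, g (B ω)))) = ent μ (fun ω => (A ω, B ω)) :=
    ent_comp_inj μ (fun ω => (A ω, B ω)) (fun x => (x.1, (x.2, g x.2)))
      (fun x y hxy => by
        have e1 := congrArg Prod.fst hxy
        have e2 := congrArg (fun z => z.2.1) hxy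
        exact Prod.ext e1 e2)
  have h2 : ent μ (fun ω => (B ω, g (B ω))) = ent μ B :=
    ent_comp_inj μ B (fun b => (b, g b)) (fun x y hxy => congrArg Prod.fst hxy)
  rw [h1, h2] at hs
  rw [condEnt, condEnt]
  linarith

lemma condEnt_nonneg [Fintype α] [Fintype β] (hμ : ∀ ω, 0 ≤ μ ω) (X : Ω → α) (Y : Ω → β) :
    0 ≤ condEnt μ X Y :=
  sub_nonneg.mpr (ent_le_ent_pair μ hμ X Y)

/-- entropy of a pair of independent variables. -/
lemma ent_pair_indep [Fintype α] [Fintype β] (h : IsPMF μ) (X : Ω → α) (Y : Ω → β)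
    (hfac : ∀ a b, pm μ (fun ω => (X ω, Y ω)) (a, b) = pm μ X a * pm μ Y b) :
    ent μ (fun ω => (X ω, Y ω)) = ent μ X + ent μ Y := by
  have hsX : ∑ a, pm μ X a = 1 := by rw [sum_pm, h.2]
  have hsY : ∑ b, pm μ Y b = 1 := by rw [sum_pm, h.2]
  have key : ∀ a b, pm μ (fun ω => (X ω, Y ω)) (a, b)
      * Real.logb 2 (pm μ (fun ω => (X ω, Y ω)) (a, b))
      = pm μ Y b * (pm μ X a * Real.logb 2 (pm μ X a))
        + pm μ X a * (pm μ Y b * Real.logb 2 (pm μ Y b)) := by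
    intro a b
    rw [hfac a b]
    rcases eq_or_lt_of_le (pm_nonneg μ h.1 X a) with ha | ha
    · rw [← ha]; simp
    · rcases eq_or_lt_of_le (pm_nonneg μ h.1 Y b) with hb | hb
      · rw [← hb]; simp
      · rw [Real.logb_mul ha.ne' hb.ne']; ring
  rw [ent, ent, ent, Fintype.sum_prod_type]
  have : ∑ a, ∑ b, pm μ (fun ω => (X ω, Y ω)) (a, b)
      * Real.logb 2 (pm μ (fun ω => (X ω, Y ω)) (a, b))
      = (∑ a, pm μ X a * Real.logb 2 (pm μ X a))
        + ∑ b, pm μ Y b * Real.logb 2 (pm μ Y b) := by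
    calc ∑ a, ∑ b, pm μ (fun ω => (X ω, Y ω)) (a, b)
        * Real.logb 2 (pm μ (fun ω => (X ω, Y ω)) (a, b))
        = ∑ a, ∑ b, (pm μ Y b * (pm μ X a * Real.logb 2 (pm μ X a))
            + pm μ X a * (pm μ Y b * Real.logb 2 (pm μ Y b))) :=
          Finset.sum_congr rfl fun a _ => Finset.sum_congr rfl fun b _ => key a b
      _ = ∑ a, ((∑ b, pm μ Y b) * (pm μ X a * Real.logb 2 (pm μ X a))
            + pm μ X a * ∑ b, pm μ Y b * Real.logb 2 (pm μ Y b)) := by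
          refine Finset.sum_congr rfl fun a _ => ?_
          rw [Finset.sum_add_distrib, ← Finset.sum_mul, ← Finset.mul_sum]
      _ = (∑ a, pm μ X a * Real.logb 2 (pm μ X a))
            + ∑ b, pm μ Y b * Real.logb 2 (pm μ Y b) := by
          rw [Finset.sum_add_distrib, hsY]
          simp only [one_mul]
          rw [← Finset.sum_mul, hsX, one_mul]
  rw [this, neg_add]
end lib3

section lib3b
variable {Ω : Type*} [Fintype Ω] {α β : Type*} (μ : Ω → ℝ)

lemma ent_le_ent_pair_left [Fintype α] [Fintype β] (hμ : ∀ ω, 0 ≤ μ ω) (X : Ω → α) (Y : Ω → β) :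
    ent μ X ≤ ent μ (fun ω => (X ω, Y ω)) := by
  have h1 : ent μ (fun ω => (Y ω, X ω)) = ent μ (fun ω => (X ω, Y ω)) :=
    ent_comp_inj μ (fun ω => (X ω, Y ω)) (fun q => (q.2, q.1))
      (fun a b h => by
        simp only [Prod.mk.injEq] at h
        exact Prod.ext h.2 h.1)
  rw [← h1]
  exact ent_le_ent_pair μ hμ Y X
end lib3b

section lib4

/-- indicator with fixed (classical) decidability -/
noncomputable def ind (P : Prop) (u : ℝ) : ℝ := if P then u else 0

lemma ind_pos {P : Prop} (h : P) (u : ℝ) : ind P u = u := if_pos h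
lemma ind_neg {P : Prop} (h : ¬P) (u : ℝ) : ind P u = 0 := if_neg h

variable {κ : Type*} [Fintype κ]

noncomputable def recomb {n : ℕ} (i : Fin n) (x : κ) (r : {j : Fin n // j ≠ i} → κ) :
    Fin n → κ :=
  fun j => if h : j = i then x else r ⟨j, h⟩

lemma recomb_at {n : ℕ} (i : Fin n) (x : κ) (r : {j : Fin n // j ≠ i} → κ) :
    recomb i x r i = x := dif_pos rfl

lemma recomb_rest {n : ℕ} (i : Fin n) (x : κ) (r : {j : Fin n // j ≠ i} → κ) :
    (fun j : {j : Fin n // j ≠ i} => recomb i x r j.1) = r := by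
  funext j
  simp only [recomb]
  rw [dif_neg j.2]

lemma sum_split {n : ℕ} (i : Fin n) (F : (Fin n → κ) → ℝ) :
    ∑ ω : Fin n → κ, F ω
      = ∑ x : κ, ∑ r : {j : Fin n // j ≠ i} → κ, F (recomb i x r) := by
  classical
  rw [← Equiv.sum_comp (Equiv.funSplitAt i κ).symm F, Fintype.sum_prod_type]
  refine Finset.sum_congr rfl fun x _ => Finset.sum_congr rfl fun r _ => ?_
  congr 1
  funext j
  simp only [Equiv.funSplitAt, Equiv.piSplitAt, Equiv.coe_fn_symm_mk, recomb]
  split <;> rename_i h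
  · subst h; rfl
  · rfl

lemma prod_recomb (p : κ → ℝ) {n : ℕ} (i : Fin n) (x : κ) (r : {j : Fin n // j ≠ i} → κ) :
    ∏ j, p (recomb i x r j) = p x * ∏ j' : {j : Fin n // j ≠ i}, p (r j') := by
  classical
  rw [Fintype.prod_eq_mul_prod_compl i]
  congr 1
  · exact congrArg p (recomb_at i x r)
  · rw [Finset.prod_subtype ({i}ᶜ : Finset (Fin n)) (p := fun j => j ≠ i)
      (fun j => by simp) (fun j => p (recomb i x r j))]
    refine Finset.prod_congr rfl ?_
    rintro ⟨j, hj⟩ -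
    simp only [recomb]
    rw [dif_neg hj]

lemma sum_prod_fun_one {ι : Type*} [Fintype ι] [DecidableEq ι] (p : κ → ℝ) (hp1 : ∑ x, p x = 1) :
    ∑ r : ι → κ, ∏ j, p (r j) = 1 := by
  classical
  have h := Fintype.prod_sum (fun (_ : ι) (x : κ) => p x)
  simp only [hp1, Finset.prod_const_one] at h
  exact h.symm

lemma isPMF_prod (p : κ → ℝ) (hp : IsPMF p) (n : ℕ) :
    IsPMF (fun ω : Fin n → κ => ∏ j, p (ω j)) :=
  ⟨fun ω => Finset.prod_nonneg fun j _ => hp.1 _, sum_prod_fun_one p hp.2⟩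

lemma pm_split_eval {α : Type*} (p : κ → ℝ) {n : ℕ} (i : Fin n)
    (R : κ → ({j : Fin n // j ≠ i} → κ) → α) (a : α) :
    pm (fun ω : Fin n → κ => ∏ j, p (ω j)) (fun ω => R (ω i) (fun j => ω j.1)) a
      = ∑ x : κ, ∑ r : {j : Fin n // j ≠ i} → κ,
          ind (R x r = a) (p x * ∏ j', p (r j')) := by
  simp only [pm]
  rw [sum_split i]
  refine Finset.sum_congr rfl fun x _ => Finset.sum_congr rfl fun r _ => ?_
  rw [recomb_at i x r, recomb_rest i x r, prod_recomb p i x r]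
  rfl

/-- independence of a function of coordinate `i` and a function of the other coordinates. -/
lemma pm_indep_split (p : κ → ℝ) (hp : IsPMF p) {n : ℕ} (i : Fin n)
    {α β : Type*} (α₀ : κ → α) (β₀ : ({j : Fin n // j ≠ i} → κ) → β) (a : α) (b : β) :
    pm (fun ω : Fin n → κ => ∏ j, p (ω j))
        (fun ω => (α₀ (ω i), β₀ (fun j => ω j.1))) (a, b)
      = pm (fun ω : Fin n → κ => ∏ j, p (ω j)) (fun ω => α₀ (ω i)) a
        * pm (fun ω : Fin n → κ => ∏ j, p (ω j)) (fun ω => β₀ (fun j => ω j.1)) b := by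
  have h1 : pm (fun ω : Fin n → κ => ∏ j, p (ω j))
      (fun ω => (α₀ (ω i), β₀ (fun j => ω j.1))) (a, b)
      = ∑ x : κ, ∑ r : {j : Fin n // j ≠ i} → κ,
          ind ((α₀ x, β₀ r) = (a, b)) (p x * ∏ j', p (r j')) :=
    pm_split_eval p i (fun x r => (α₀ x, β₀ r)) (a, b)
  have h2 : pm (fun ω : Fin n → κ => ∏ j, p (ω j)) (fun ω => α₀ (ω i)) a
      = ∑ x : κ, ∑ r : {j : Fin n // j ≠ i} → κ,
          ind (α₀ x = a) (p x * ∏ j', p (r j')) :=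
    pm_split_eval p i (fun x _ => α₀ x) a
  have h3 : pm (fun ω : Fin n → κ => ∏ j, p (ω j)) (fun ω => β₀ (fun j => ω j.1)) b
      = ∑ x : κ, ∑ r : {j : Fin n // j ≠ i} → κ,
          ind (β₀ r = b) (p x * ∏ j', p (r j')) :=
    pm_split_eval p i (fun _ r => β₀ r) b
  rw [h1, h2, h3]
  have e1 : ∑ x : κ, ∑ r : {j : Fin n // j ≠ i} → κ,
      ind ((α₀ x, β₀ r) = (a, b)) (p x * ∏ j', p (r j'))
      = (∑ x : κ, ind (α₀ x = a) (p x))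
        * ∑ r : {j : Fin n // j ≠ i} → κ, ind (β₀ r = b) (∏ j', p (r j')) := by
    rw [Finset.sum_mul_sum]
    refine Finset.sum_congr rfl fun x _ => Finset.sum_congr rfl fun r _ => ?_
    by_cases hx : α₀ x = a <;> by_cases hr : β₀ r = b <;>
      simp [ind, Prod.ext_iff, hx, hr]
  have e2 : ∑ x : κ, ∑ r : {j : Fin n // j ≠ i} → κ,
      ind (α₀ x = a) (p x * ∏ j', p (r j'))
      = ∑ x : κ, ind (α₀ x = a) (p x) := by
    refine Finset.sum_congr rfl fun x _ => ?_
    by_cases hx : α₀ x = a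
    · simp only [ind_pos hx]
      rw [← Finset.mul_sum,
        show (∑ r : {j : Fin n // j ≠ i} → κ, ∏ j', p (r j')) = 1 from sum_prod_fun_one p hp.2,
        mul_one]
    · simp only [ind_neg hx, Finset.sum_const_zero]
  have e3 : ∑ x : κ, ∑ r : {j : Fin n // j ≠ i} → κ,
      ind (β₀ r = b) (p x * ∏ j', p (r j'))
      = ∑ r : {j : Fin n // j ≠ i} → κ, ind (β₀ r = b) (∏ j', p (r j')) := by
    calc ∑ x : κ, ∑ r : {j : Fin n // j ≠ i} → κ,
        ind (β₀ r = b) (p x * ∏ j', p (r j'))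
        = ∑ x : κ, p x * ∑ r : {j : Fin n // j ≠ i} → κ,
            ind (β₀ r = b) (∏ j', p (r j')) := by
          refine Finset.sum_congr rfl fun x _ => ?_
          rw [Finset.mul_sum]
          refine Finset.sum_congr rfl fun r _ => ?_
          by_cases hr : β₀ r = b
          · rw [ind_pos hr, ind_pos hr]
          · rw [ind_neg hr, ind_neg hr, mul_zero]
      _ = ∑ r : {j : Fin n // j ≠ i} → κ, ind (β₀ r = b) (∏ j', p (r j')) := by
          rw [← Finset.sum_mul, hp.2, one_mul]
  rw [e1, e2, e3]

/-- Markov chain: a function of `(X_i, coordinates ≠ i)` that does not depend on `Y_i`. -/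
lemma condIndep_split (p : κ → ℝ) {n : ℕ} (i : Fin n) {α β γ : Type*}
    (g₁ : κ → β) (g₂ : κ → γ) (τ : β → ({j : Fin n // j ≠ i} → κ) → α) :
    CondIndepRV (fun ω : Fin n → κ => ∏ j, p (ω j))
      (fun ω => τ (g₁ (ω i)) (fun j => ω j.1))
      (fun ω => g₁ (ω i)) (fun ω => g₂ (ω i)) := by
  intro t x y
  have h1 : pm (fun ω : Fin n → κ => ∏ j, p (ω j))
      (fun ω => (τ (g₁ (ω i)) (fun j => ω j.1), g₁ (ω i), g₂ (ω i))) (t, x, y)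
      = ∑ z : κ, ∑ r : {j : Fin n // j ≠ i} → κ,
          ind ((τ (g₁ z) r, g₁ z, g₂ z) = (t, x, y)) (p z * ∏ j', p (r j')) :=
    pm_split_eval p i (fun z r => (τ (g₁ z) r, g₁ z, g₂ z)) (t, x, y)
  have h2 : pm (fun ω : Fin n → κ => ∏ j, p (ω j))
      (fun ω => (τ (g₁ (ω i)) (fun j => ω j.1), g₁ (ω i))) (t, x)
      = ∑ z : κ, ∑ r : {j : Fin n // j ≠ i} → κ,
          ind ((τ (g₁ z) r, g₁ z) = (t, x)) (p z * ∏ j', p (r j')) :=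
    pm_split_eval p i (fun z r => (τ (g₁ z) r, g₁ z)) (t, x)
  have h3 : pm (fun ω : Fin n → κ => ∏ j, p (ω j)) (fun ω => g₁ (ω i)) x
      = ∑ z : κ, ∑ r : {j : Fin n // j ≠ i} → κ,
          ind (g₁ z = x) (p z * ∏ j', p (r j')) :=
    pm_split_eval p i (fun z _ => g₁ z) x
  have h4 : pm (fun ω : Fin n → κ => ∏ j, p (ω j))
      (fun ω => (g₁ (ω i), g₂ (ω i))) (x, y)
      = ∑ z : κ, ∑ r : {j : Fin n // j ≠ i} → κ,
          ind ((g₁ z, g₂ z) = (x, y)) (p z * ∏ j', p (r j')) :=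
    pm_split_eval p i (fun z _ => (g₁ z, g₂ z)) (x, y)
  have e1 : ∑ z : κ, ∑ r : {j : Fin n // j ≠ i} → κ,
      ind ((τ (g₁ z) r, g₁ z, g₂ z) = (t, x, y)) (p z * ∏ j', p (r j'))
      = (∑ z : κ, ind ((g₁ z, g₂ z) = (x, y)) (p z))
        * ∑ r : {j : Fin n // j ≠ i} → κ, ind (τ x r = t) (∏ j', p (r j')) := by
    rw [Finset.sum_mul_sum]
    refine Finset.sum_congr rfl fun z _ => Finset.sum_congr rfl fun r _ => ?_
    by_cases hx : g₁ z = x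
    · subst hx
      by_cases hy : g₂ z = y <;> by_cases ht : τ (g₁ z) r = t <;>
        simp [ind, Prod.ext_iff, hy, ht]
    · simp [ind, Prod.ext_iff, hx]
  have e2 : ∑ z : κ, ∑ r : {j : Fin n // j ≠ i} → κ,
      ind ((τ (g₁ z) r, g₁ z) = (t, x)) (p z * ∏ j', p (r j'))
      = (∑ z : κ, ind (g₁ z = x) (p z))
        * ∑ r : {j : Fin n // j ≠ i} → κ, ind (τ x r = t) (∏ j', p (r j')) := by
    rw [Finset.sum_mul_sum]
    refine Finset.sum_congr rfl fun z _ => Finset.sum_congr rfl fun r _ => ?_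
    by_cases hx : g₁ z = x
    · subst hx
      by_cases ht : τ (g₁ z) r = t <;> simp [ind, Prod.ext_iff, ht]
    · simp [ind, Prod.ext_iff, hx]
  have e3 : ∑ z : κ, ∑ r : {j : Fin n // j ≠ i} → κ,
      ind (g₁ z = x) (p z * ∏ j', p (r j'))
      = (∑ z : κ, ind (g₁ z = x) (p z))
        * ∑ r : {j : Fin n // j ≠ i} → κ, ∏ j', p (r j') := by
    rw [Finset.sum_mul_sum]
    refine Finset.sum_congr rfl fun z _ => Finset.sum_congr rfl fun r _ => ?_
    by_cases hx : g₁ z = x <;> simp [ind, hx]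
  have e4 : ∑ z : κ, ∑ r : {j : Fin n // j ≠ i} → κ,
      ind ((g₁ z, g₂ z) = (x, y)) (p z * ∏ j', p (r j'))
      = (∑ z : κ, ind ((g₁ z, g₂ z) = (x, y)) (p z))
        * ∑ r : {j : Fin n // j ≠ i} → κ, ∏ j', p (r j') := by
    rw [Finset.sum_mul_sum]
    refine Finset.sum_congr rfl fun z _ => Finset.sum_congr rfl fun r _ => ?_
    by_cases hx : (g₁ z, g₂ z) = (x, y) <;> simp [ind, hx]
  rw [h1, h2, h3, h4, e1, e2, e3, e4]
  ring
end lib4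

/-- **Steps in the converse of Theorem 3 (full cooperation).** With
`C_0 = φ_0(X^n)`, `C_X = φ_X(X^n)`, `C_Y = φ_Y(C_0, Y^n)` computed from `n` i.i.d.
copies of `(X,Y)`, if `H(f(X_1,Y_1),…,f(X_n,Y_n) | C_X, C_Y) ≤ ε` then, with
`T_i = (f(X_{i+1},Y_{i+1}),…,f(X_n,Y_n), C_X)`:
(i) `T_i − X_i − Y_i` is a Markov chain for every `i`;
(ii) `H(C_Y) ≥ Σ_i H(f(X_i,Y_i) | T_i) − ε`;
(iii) `H(C_X,C_Y) ≥ Σ_i [H(f(X_i,Y_i)) + I(X_i; T_i | f(X_i,Y_i))] − ε`. -/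
theorem full_cooperation_converse_steps
    {𝒳 𝒴 ℱ 𝒞0 𝒞X 𝒞Y : Type*}
    [Fintype 𝒳] [Fintype 𝒴] [Fintype ℱ] [Fintype 𝒞0] [Fintype 𝒞X] [Fintype 𝒞Y]
    (p : 𝒳 × 𝒴 → ℝ) (hp : IsPMF p) (f : 𝒳 × 𝒴 → ℱ) (n : ℕ)
    (φ0 : (Fin n → 𝒳) → 𝒞0) (φX : (Fin n → 𝒳) → 𝒞X) (φY : 𝒞0 × (Fin n → 𝒴) → 𝒞Y)
    (ε : ℝ)
    (hfano : condEnt (prodPMF p n) (fun ω => fun j => f (ω j))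
      (fun ω => (φX fun j => (ω j).1,
        φY (φ0 fun j => (ω j).1, fun j => (ω j).2))) ≤ ε) :
    (∀ i : Fin n, CondIndepRV (prodPMF p n)
        (fun ω => (fun j : {j : Fin n // i < j} => f (ω j.1), φX fun j => (ω j).1))
        (fun ω => (ω i).1) (fun ω => (ω i).2)) ∧
    ent (prodPMF p n) (fun ω => φY (φ0 fun j => (ω j).1, fun j => (ω j).2))
        ≥ (∑ i : Fin n, condEnt (prodPMF p n) (fun ω => f (ω i))
            (fun ω => (fun j : {j : Fin n // i < j} => f (ω j.1),
              φX fun j => (ω j).1))) - ε ∧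
    ent (prodPMF p n) (fun ω => (φX fun j => (ω j).1,
        φY (φ0 fun j => (ω j).1, fun j => (ω j).2)))
      ≥ (∑ i : Fin n, (ent (prodPMF p n) (fun ω => f (ω i))
          + condMI (prodPMF p n) (fun ω => (ω i).1)
            (fun ω => (fun j : {j : Fin n // i < j} => f (ω j.1),
              φX fun j => (ω j).1))
            (fun ω => f (ω i)))) - ε := by
  have hμPMF : IsPMF (prodPMF p n) := isPMF_prod p hp n
  have hμ0 : ∀ ω, 0 ≤ prodPMF p n ω := hμPMF.1
  have htel : ∀ V : ℕ → ℝ, (∑ i : Fin n, (V i.val - V (i.val + 1))) = V 0 - V n := by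
    intro V
    calc ∑ i : Fin n, (V i.val - V (i.val + 1))
        = ∑ k ∈ Finset.range n, (V k - V (k + 1)) :=
          Fin.sum_univ_eq_sum_range (fun k => V k - V (k + 1)) n
      _ = V 0 - V n := Finset.sum_range_sub' V n
  refine ⟨?_, ?_, ?_⟩
  -- ────────────────────────── (i) Markov chains ──────────────────────────
  · intro i
    set τ : 𝒳 → ({j : Fin n // j ≠ i} → 𝒳 × 𝒴) →
        (({j : Fin n // i < j} → ℱ) × 𝒞X) :=
      fun x r => ((fun j : {j : Fin n // i < j} => f (r ⟨j.1, j.2.ne'⟩)),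
        φX fun j => if h : j = i then x else (r ⟨j, h⟩).1) with hτ
    have hA : (fun ω : Fin n → 𝒳 × 𝒴 =>
        ((fun j : {j : Fin n // i < j} => f (ω j.1)), φX fun j => (ω j).1))
        = (fun ω : Fin n → 𝒳 × 𝒴 => τ ((ω i).1) (fun j => ω j.1)) := by
      funext ω
      refine Prod.ext rfl ?_
      refine congrArg φX (funext fun j => ?_)
      by_cases h : j = i
      · subst h; rw [dif_pos rfl]
      · rw [dif_neg h]
    rw [hA]
    exact condIndep_split p i Prod.fst Prod.snd τ
  -- ────────────────────────── (ii) bound on H(C_Y) ──────────────────────────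
  · set V : ℕ → ℝ := fun k => ent (prodPMF p n)
      (fun ω => ((fun j : {j : Fin n // k ≤ j.val} => f (ω j.1)),
        φX fun j => (ω j).1)) with hV
    have hVk : ∀ k, V k = ent (prodPMF p n)
        (fun ω => ((fun j : {j : Fin n // k ≤ j.val} => f (ω j.1)),
          φX fun j => (ω j).1)) := fun k => rfl
    have hstep : ∀ i : Fin n, condEnt (prodPMF p n) (fun ω => f (ω i))
        (fun ω => ((fun j : {j : Fin n // i < j} => f (ω j.1)), φX fun j => (ω j).1))
        = V i.val - V (i.val + 1) := by
      intro i
      have hTi : V (i.val + 1) = ent (prodPMF p n)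
          (fun ω => ((fun j : {j : Fin n // i < j} => f (ω j.1)),
            φX fun j => (ω j).1)) := by
        rw [hVk (i.val + 1)]
        refine ent_comp_inj (prodPMF p n)
          (fun ω => ((fun j : {j : Fin n // i < j} => f (ω j.1)), φX fun j => (ω j).1))
          (fun q : ({j : Fin n // i < j} → ℱ) × 𝒞X =>
            ((fun j : {j : Fin n // i.val + 1 ≤ j.val} =>
              q.1 ⟨j.1, Fin.lt_def.mpr (by have hj := j.2; omega)⟩), q.2))
          (Function.LeftInverse.injective
            (g := fun s : ({j : Fin n // i.val + 1 ≤ j.val} → ℱ) × 𝒞X =>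
              ((fun j : {j : Fin n // i < j} =>
                s.1 ⟨j.1, by have hj := Fin.lt_def.mp j.2; omega⟩), s.2))
            (fun q => rfl))
      have hFTi : V i.val = ent (prodPMF p n)
          (fun ω => (f (ω i), ((fun j : {j : Fin n // i < j} => f (ω j.1)),
            φX fun j => (ω j).1))) := by
        have hcomp : (fun ω : Fin n → 𝒳 × 𝒴 =>
            ((fun j : {j : Fin n // i.val ≤ j.val} => f (ω j.1)),
              φX fun j => (ω j).1))
            = (fun ω : Fin n → 𝒳 × 𝒴 =>
                ((fun j : {j : Fin n // i.val ≤ j.val} =>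
                  if h : j.1 = i then f (ω i) else f (ω j.1)),
                  φX fun j => (ω j).1)) := by
          funext ω
          refine Prod.ext ?_ rfl
          funext j
          show f (ω j.1) = if h : j.1 = i then f (ω i) else f (ω j.1)
          by_cases h : j.1 = i
          · rw [dif_pos h, h]
          · rw [dif_neg h]
        rw [hVk i.val, hcomp]
        refine ent_comp_inj (prodPMF p n)
          (fun ω => (f (ω i), ((fun j : {j : Fin n // i < j} => f (ω j.1)),
            φX fun j => (ω j).1)))
          (fun q : ℱ × (({j : Fin n // i < j} → ℱ) × 𝒞X) =>
            ((fun j : {j : Fin n // i.val ≤ j.val} =>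
              if h : j.1 = i then q.1
              else q.2.1 ⟨j.1, Fin.lt_def.mpr (by
                have hj := j.2
                have hv : j.1.val ≠ i.val := fun hv => h (Fin.ext hv)
                omega)⟩), q.2.2))
          (Function.LeftInverse.injective
            (g := fun s : ({j : Fin n // i.val ≤ j.val} → ℱ) × 𝒞X =>
              (s.1 ⟨i, Nat.le_refl _⟩,
                ((fun j : {j : Fin n // i < j} =>
                  s.1 ⟨j.1, Nat.le_of_lt (Fin.lt_def.mp j.2)⟩), s.2)))
            (fun q => by
              refine Prod.ext (dif_pos rfl) (Prod.ext ?_ rfl)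
              funext j
              exact dif_neg j.2.ne'))
      simp only [condEnt]
      rw [hFTi, hTi]
    have hsum : (∑ i : Fin n, condEnt (prodPMF p n) (fun ω => f (ω i))
        (fun ω => ((fun j : {j : Fin n // i < j} => f (ω j.1)),
          φX fun j => (ω j).1))) = V 0 - V n := by
      rw [Finset.sum_congr rfl (fun i _ => hstep i)]
      exact htel V
    have hV0 : V 0 = ent (prodPMF p n)
        (fun ω => ((fun j : Fin n => f (ω j)), φX fun j => (ω j).1)) := by
      rw [hVk 0]
      refine ent_comp_inj (prodPMF p n)
        (fun ω => ((fun j : Fin n => f (ω j)), φX fun j => (ω j).1))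
        (fun q : (Fin n → ℱ) × 𝒞X =>
          ((fun j : {j : Fin n // 0 ≤ j.val} => q.1 j.1), q.2))
        (Function.LeftInverse.injective
          (g := fun s : ({j : Fin n // 0 ≤ j.val} → ℱ) × 𝒞X =>
            ((fun x : Fin n => s.1 ⟨x, Nat.zero_le _⟩), s.2))
          (fun q => rfl))
    have hVn : V n = ent (prodPMF p n) (fun ω => φX fun j => (ω j).1) := by
      rw [hVk n]
      have hcomp : (fun ω : Fin n → 𝒳 × 𝒴 =>
          ((fun j : {j : Fin n // n ≤ j.val} => f (ω j.1)), φX fun j => (ω j).1))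
          = (fun ω : Fin n → 𝒳 × 𝒴 =>
              ((fun j : {j : Fin n // n ≤ j.val} =>
                (absurd j.1.isLt (Nat.not_lt.mpr j.2) : ℱ)), φX fun j => (ω j).1)) := by
        funext ω
        refine Prod.ext ?_ rfl
        funext j
        exact absurd j.1.isLt (Nat.not_lt.mpr j.2)
      rw [hcomp]
      exact ent_comp_inj (prodPMF p n)
        (fun ω => φX fun j => (ω j).1)
        (fun c : 𝒞X => ((fun j : {j : Fin n // n ≤ j.val} =>
          (absurd j.1.isLt (Nat.not_lt.mpr j.2) : ℱ)), c))
        (fun a b h => congrArg Prod.snd h)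
    have q1 : ent (prodPMF p n)
        (fun ω => ((fun j : Fin n => f (ω j)), φX fun j => (ω j).1))
        ≤ ent (prodPMF p n) (fun ω => ((fun j : Fin n => f (ω j)),
          (φX fun j => (ω j).1, φY (φ0 fun j => (ω j).1, fun j => (ω j).2)))) :=
      ent_comp_le (prodPMF p n) hμ0
        (fun ω => ((fun j : Fin n => f (ω j)),
          (φX fun j => (ω j).1, φY (φ0 fun j => (ω j).1, fun j => (ω j).2))))
        (fun q => (q.1, q.2.1))
    have q2 : ent (prodPMF p n) (fun ω => ((fun j : Fin n => f (ω j)),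
          (φX fun j => (ω j).1, φY (φ0 fun j => (ω j).1, fun j => (ω j).2))))
        - ent (prodPMF p n) (fun ω => (φX fun j => (ω j).1,
          φY (φ0 fun j => (ω j).1, fun j => (ω j).2))) ≤ ε := hfano
    have q3 : ent (prodPMF p n) (fun ω => (φX fun j => (ω j).1,
          φY (φ0 fun j => (ω j).1, fun j => (ω j).2)))
        ≤ ent (prodPMF p n) (fun ω => φX fun j => (ω j).1)
          + ent (prodPMF p n)
            (fun ω => φY (φ0 fun j => (ω j).1, fun j => (ω j).2)) :=
      ent_pair_le (prodPMF p n) hμPMF _ _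
    rw [ge_iff_le, hsum]
    linarith [hV0, hVn, q1, q2, q3]
  · set V2 : ℕ → ℝ := fun k => ent (prodPMF p n)
      (fun ω => (fun j : {j : Fin n // k ≤ j.val} => ((ω j.1).1, f (ω j.1)))) with hV2
    have hV2k : ∀ k, V2 k = ent (prodPMF p n)
        (fun ω => (fun j : {j : Fin n // k ≤ j.val} => ((ω j.1).1, f (ω j.1)))) :=
      fun k => rfl
    set W : ℕ → ℝ := fun k => ent (prodPMF p n)
      (fun ω => ((fun j : {j : Fin n // k ≤ j.val} => (ω j.1).1),
        ((fun j : Fin n => f (ω j)), φX fun j => (ω j).1))) with hW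
    have hWk : ∀ k, W k = ent (prodPMF p n)
        (fun ω => ((fun j : {j : Fin n // k ≤ j.val} => (ω j.1).1),
          ((fun j : Fin n => f (ω j)), φX fun j => (ω j).1))) := fun k => rfl
    have hterm : ∀ i : Fin n,
        ent (prodPMF p n) (fun ω => f (ω i))
          + condMI (prodPMF p n) (fun ω => (ω i).1)
            (fun ω => ((fun j : {j : Fin n // i < j} => f (ω j.1)), φX fun j => (ω j).1))
            (fun ω => f (ω i))
        = ent (prodPMF p n) (fun ω => ((ω i).1, f (ω i)))
          - (ent (prodPMF p n) (fun ω => ((ω i).1,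
              (((fun j : {j : Fin n // i < j} => f (ω j.1)), φX fun j => (ω j).1), f (ω i))))
            - ent (prodPMF p n) (fun ω => (((fun j : {j : Fin n // i < j} => f (ω j.1)),
                φX fun j => (ω j).1), f (ω i)))) := by
      intro i
      simp only [condMI, condEnt]
      ring
    have hsplit : ∀ i : Fin n, V2 i.val
        = ent (prodPMF p n) (fun ω => ((ω i).1, f (ω i))) + V2 (i.val + 1) := by
      intro i
      have hcomp : (fun ω : Fin n → 𝒳 × 𝒴 =>
          (fun j : {j : Fin n // i.val ≤ j.val} => ((ω j.1).1, f (ω j.1))))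
          = (fun ω : Fin n → 𝒳 × 𝒴 =>
              (fun j : {j : Fin n // i.val ≤ j.val} =>
                if h : j.1 = i then ((ω i).1, f (ω i)) else ((ω j.1).1, f (ω j.1)))) := by
        funext ω j
        show ((ω j.1).1, f (ω j.1))
            = if h : j.1 = i then ((ω i).1, f (ω i)) else ((ω j.1).1, f (ω j.1))
        by_cases h : j.1 = i
        · rw [dif_pos h, h]
        · rw [dif_neg h]
      have hrel : V2 i.val = ent (prodPMF p n)
          (fun ω => (((ω i).1, f (ω i)),
            (fun j : {j : Fin n // i.val + 1 ≤ j.val} => ((ω j.1).1, f (ω j.1))))) := by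
        rw [hV2k i.val, hcomp]
        refine ent_comp_inj (prodPMF p n)
          (fun ω => (((ω i).1, f (ω i)),
            (fun j : {j : Fin n // i.val + 1 ≤ j.val} => ((ω j.1).1, f (ω j.1)))))
          (fun q : (𝒳 × ℱ) × ({j : Fin n // i.val + 1 ≤ j.val} → 𝒳 × ℱ) =>
            (fun j : {j : Fin n // i.val ≤ j.val} =>
              if h : j.1 = i then q.1
              else q.2 ⟨j.1, by
                have hj := j.2
                have hv : j.1.val ≠ i.val := fun hv => h (Fin.ext hv)
                omega⟩))
          (Function.LeftInverse.injective
            (g := fun s : ({j : Fin n // i.val ≤ j.val} → 𝒳 × ℱ) =>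
              (s ⟨i, Nat.le_refl _⟩,
                fun j : {j : Fin n // i.val + 1 ≤ j.val} =>
                  s ⟨j.1, by have hj := j.2; omega⟩))
            (fun q => by
              refine Prod.ext (dif_pos rfl) ?_
              funext j
              exact dif_neg (fun hh => by have hj := j.2; rw [hh] at hj; omega)))
      have hfac : ∀ (a : 𝒳 × ℱ) (b : {j : Fin n // i.val + 1 ≤ j.val} → 𝒳 × ℱ),
          pm (prodPMF p n) (fun ω => (((ω i).1, f (ω i)),
            (fun j : {j : Fin n // i.val + 1 ≤ j.val} => ((ω j.1).1, f (ω j.1))))) (a, b)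
          = pm (prodPMF p n) (fun ω => ((ω i).1, f (ω i))) a
            * pm (prodPMF p n)
              (fun ω => (fun j : {j : Fin n // i.val + 1 ≤ j.val} =>
                ((ω j.1).1, f (ω j.1)))) b :=
        fun a b => pm_indep_split p hp i (fun z => (z.1, f z))
          (fun r => (fun j : {j : Fin n // i.val + 1 ≤ j.val} =>
            ((r ⟨j.1, by intro hh; have hj := j.2; rw [hh] at hj; omega⟩).1,
              f (r ⟨j.1, by intro hh; have hj := j.2; rw [hh] at hj; omega⟩)))) a b
      have hind := ent_pair_indep (prodPMF p n) hμPMF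
        (fun ω => ((ω i).1, f (ω i)))
        (fun ω => (fun j : {j : Fin n // i.val + 1 ≤ j.val} => ((ω j.1).1, f (ω j.1))))
        hfac
      rw [hrel, hind, hV2k (i.val + 1)]
    have hsumA : (∑ i : Fin n, ent (prodPMF p n) (fun ω => ((ω i).1, f (ω i))))
        = V2 0 - V2 n := by
      have h1 : ∀ i : Fin n, ent (prodPMF p n) (fun ω => ((ω i).1, f (ω i)))
          = V2 i.val - V2 (i.val + 1) := fun i => by rw [hsplit i]; ring
      rw [Finset.sum_congr rfl (fun i _ => h1 i)]
      exact htel V2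
    have hV2n : V2 n = 0 := by
      have hcomp : (fun ω : Fin n → 𝒳 × 𝒴 =>
          (fun j : {j : Fin n // n ≤ j.val} => ((ω j.1).1, f (ω j.1))))
          = (fun _ : Fin n → 𝒳 × 𝒴 =>
              (fun j : {j : Fin n // n ≤ j.val} =>
                (absurd j.1.isLt (Nat.not_lt.mpr j.2) : 𝒳 × ℱ))) := by
        funext ω j
        exact absurd j.1.isLt (Nat.not_lt.mpr j.2)
      rw [hV2k n, hcomp]
      exact ent_const (prodPMF p n) hμPMF _
    have hV20 : V2 0 = ent (prodPMF p n)
        (fun ω => (fun j : Fin n => ((ω j).1, f (ω j)))) := by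
      rw [hV2k 0]
      exact ent_comp_inj (prodPMF p n)
        (fun ω => (fun j : Fin n => ((ω j).1, f (ω j))))
        (fun q : Fin n → 𝒳 × ℱ => (fun j : {j : Fin n // 0 ≤ j.val} => q j.1))
        (Function.LeftInverse.injective
          (g := fun s : ({j : Fin n // 0 ≤ j.val} → 𝒳 × ℱ) =>
            (fun x : Fin n => s ⟨x, Nat.zero_le _⟩))
          (fun q => rfl))
    have hWstep : ∀ i : Fin n, W i.val - W (i.val + 1)
        ≤ ent (prodPMF p n) (fun ω => ((ω i).1,
            (((fun j : {j : Fin n // i < j} => f (ω j.1)), φX fun j => (ω j).1), f (ω i))))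
          - ent (prodPMF p n) (fun ω => (((fun j : {j : Fin n // i < j} => f (ω j.1)),
              φX fun j => (ω j).1), f (ω i))) := by
      intro i
      have hcomp : (fun ω : Fin n → 𝒳 × 𝒴 =>
          ((fun j : {j : Fin n // i.val ≤ j.val} => (ω j.1).1),
            ((fun j : Fin n => f (ω j)), φX fun j => (ω j).1)))
          = (fun ω : Fin n → 𝒳 × 𝒴 =>
              ((fun j : {j : Fin n // i.val ≤ j.val} =>
                if h : j.1 = i then (ω i).1 else (ω j.1).1),
                ((fun j : Fin n => f (ω j)), φX fun j => (ω j).1))) := by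
        funext ω
        refine Prod.ext ?_ rfl
        funext j
        show (ω j.1).1 = if h : j.1 = i then (ω i).1 else (ω j.1).1
        by_cases h : j.1 = i
        · rw [dif_pos h, h]
        · rw [dif_neg h]
      have hrelW : W i.val = ent (prodPMF p n)
          (fun ω => ((ω i).1,
            ((fun j : {j : Fin n // i.val + 1 ≤ j.val} => (ω j.1).1),
              ((fun j : Fin n => f (ω j)), φX fun j => (ω j).1)))) := by
        rw [hWk i.val, hcomp]
        refine ent_comp_inj (prodPMF p n)
          (fun ω => ((ω i).1,
            ((fun j : {j : Fin n // i.val + 1 ≤ j.val} => (ω j.1).1),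
              ((fun j : Fin n => f (ω j)), φX fun j => (ω j).1))))
          (fun q : 𝒳 × (({j : Fin n // i.val + 1 ≤ j.val} → 𝒳)
              × ((Fin n → ℱ) × 𝒞X)) =>
            ((fun j : {j : Fin n // i.val ≤ j.val} =>
              if h : j.1 = i then q.1
              else q.2.1 ⟨j.1, by
                have hj := j.2
                have hv : j.1.val ≠ i.val := fun hv => h (Fin.ext hv)
                omega⟩), q.2.2))
          (Function.LeftInverse.injective
            (g := fun s : ({j : Fin n // i.val ≤ j.val} → 𝒳) × ((Fin n → ℱ) × 𝒞X) =>
              (s.1 ⟨i, Nat.le_refl _⟩,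
                ((fun j : {j : Fin n // i.val + 1 ≤ j.val} =>
                  s.1 ⟨j.1, by have hj := j.2; omega⟩), s.2)))
            (fun q => by
              refine Prod.ext (dif_pos rfl) (Prod.ext ?_ rfl)
              funext j
              exact dif_neg (fun hh => by have hj := j.2; rw [hh] at hj; omega)))
      have hle : ent (prodPMF p n)
          (fun ω => ((ω i).1,
            ((fun j : {j : Fin n // i.val + 1 ≤ j.val} => (ω j.1).1),
              ((fun j : Fin n => f (ω j)), φX fun j => (ω j).1))))
          - ent (prodPMF p n)
            (fun ω => ((fun j : {j : Fin n // i.val + 1 ≤ j.val} => (ω j.1).1),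
              ((fun j : Fin n => f (ω j)), φX fun j => (ω j).1)))
          ≤ ent (prodPMF p n) (fun ω => ((ω i).1,
              (((fun j : {j : Fin n // i < j} => f (ω j.1)), φX fun j => (ω j).1), f (ω i))))
            - ent (prodPMF p n) (fun ω => (((fun j : {j : Fin n // i < j} => f (ω j.1)),
                φX fun j => (ω j).1), f (ω i))) :=
        condEnt_comp_le (prodPMF p n) hμ0 (fun ω => (ω i).1)
          (fun ω => ((fun j : {j : Fin n // i.val + 1 ≤ j.val} => (ω j.1).1),
            ((fun j : Fin n => f (ω j)), φX fun j => (ω j).1)))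
          (fun q => (((fun j : {j : Fin n // i < j} => q.2.1 j.1), q.2.2), q.2.1 i))
      rw [hrelW, hWk (i.val + 1)]
      exact hle
    have hWsum : W 0 - W n
        ≤ ∑ i : Fin n,
            (ent (prodPMF p n) (fun ω => ((ω i).1,
              (((fun j : {j : Fin n // i < j} => f (ω j.1)), φX fun j => (ω j).1), f (ω i))))
            - ent (prodPMF p n) (fun ω => (((fun j : {j : Fin n // i < j} => f (ω j.1)),
                φX fun j => (ω j).1), f (ω i)))) := by
      rw [← htel W]
      exact Finset.sum_le_sum (fun i _ => hWstep i)
    have hW0 : W 0 = ent (prodPMF p n)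
        (fun ω => ((fun j : Fin n => (ω j).1),
          ((fun j : Fin n => f (ω j)), φX fun j => (ω j).1))) := by
      rw [hWk 0]
      exact ent_comp_inj (prodPMF p n)
        (fun ω => ((fun j : Fin n => (ω j).1),
          ((fun j : Fin n => f (ω j)), φX fun j => (ω j).1)))
        (fun q : (Fin n → 𝒳) × ((Fin n → ℱ) × 𝒞X) =>
          ((fun j : {j : Fin n // 0 ≤ j.val} => q.1 j.1), q.2))
        (Function.LeftInverse.injective
          (g := fun s : ({j : Fin n // 0 ≤ j.val} → 𝒳) × ((Fin n → ℱ) × 𝒞X) =>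
            ((fun x : Fin n => s.1 ⟨x, Nat.zero_le _⟩), s.2))
          (fun q => rfl))
    have hWn : W n = ent (prodPMF p n)
        (fun ω => ((fun j : Fin n => f (ω j)), φX fun j => (ω j).1)) := by
      rw [hWk n]
      have hcomp : (fun ω : Fin n → 𝒳 × 𝒴 =>
          ((fun j : {j : Fin n // n ≤ j.val} => (ω j.1).1),
            ((fun j : Fin n => f (ω j)), φX fun j => (ω j).1)))
          = (fun ω : Fin n → 𝒳 × 𝒴 =>
              ((fun j : {j : Fin n // n ≤ j.val} =>
                (absurd j.1.isLt (Nat.not_lt.mpr j.2) : 𝒳)),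
                ((fun j : Fin n => f (ω j)), φX fun j => (ω j).1))) := by
        funext ω
        refine Prod.ext ?_ rfl
        funext j
        exact absurd j.1.isLt (Nat.not_lt.mpr j.2)
      rw [hcomp]
      exact ent_comp_inj (prodPMF p n)
        (fun ω => ((fun j : Fin n => f (ω j)), φX fun j => (ω j).1))
        (fun c : (Fin n → ℱ) × 𝒞X =>
          ((fun j : {j : Fin n // n ≤ j.val} =>
            (absurd j.1.isLt (Nat.not_lt.mpr j.2) : 𝒳)), c))
        (fun a b h => congrArg Prod.snd h)
    have r1 : ent (prodPMF p n) (fun ω => (fun j : Fin n => ((ω j).1, f (ω j))))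
        ≤ ent (prodPMF p n) (fun ω => ((fun j : Fin n => ((ω j).1, f (ω j))),
          (φX fun j => (ω j).1, φY (φ0 fun j => (ω j).1, fun j => (ω j).2)))) :=
      ent_le_ent_pair_left (prodPMF p n) hμ0
        (fun ω => (fun j : Fin n => ((ω j).1, f (ω j))))
        (fun ω => (φX fun j => (ω j).1, φY (φ0 fun j => (ω j).1, fun j => (ω j).2)))
    have r2 : ent (prodPMF p n) (fun ω => ((fun j : Fin n => ((ω j).1, f (ω j))),
          (φX fun j => (ω j).1, φY (φ0 fun j => (ω j).1, fun j => (ω j).2))))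
        = ent (prodPMF p n) (fun ω => ((fun j : Fin n => (ω j).1),
            ((fun j : Fin n => f (ω j)),
              (φX fun j => (ω j).1, φY (φ0 fun j => (ω j).1, fun j => (ω j).2))))) :=
      ent_comp_inj (prodPMF p n)
        (fun ω => ((fun j : Fin n => (ω j).1),
          ((fun j : Fin n => f (ω j)),
            (φX fun j => (ω j).1, φY (φ0 fun j => (ω j).1, fun j => (ω j).2)))))
        (fun q : (Fin n → 𝒳) × ((Fin n → ℱ) × (𝒞X × 𝒞Y)) =>
          ((fun j : Fin n => (q.1 j, q.2.1 j)), q.2.2))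
        (Function.LeftInverse.injective
          (g := fun s : (Fin n → 𝒳 × ℱ) × (𝒞X × 𝒞Y) =>
            ((fun j : Fin n => (s.1 j).1), ((fun j : Fin n => (s.1 j).2), s.2)))
          (fun q => rfl))
    have r3 : ent (prodPMF p n) (fun ω => ((fun j : Fin n => (ω j).1),
            ((fun j : Fin n => f (ω j)),
              (φX fun j => (ω j).1, φY (φ0 fun j => (ω j).1, fun j => (ω j).2)))))
          - ent (prodPMF p n) (fun ω => ((fun j : Fin n => f (ω j)),
              (φX fun j => (ω j).1, φY (φ0 fun j => (ω j).1, fun j => (ω j).2))))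
        ≤ ent (prodPMF p n) (fun ω => ((fun j : Fin n => (ω j).1),
            ((fun j : Fin n => f (ω j)), φX fun j => (ω j).1)))
          - ent (prodPMF p n)
            (fun ω => ((fun j : Fin n => f (ω j)), φX fun j => (ω j).1)) :=
      condEnt_comp_le (prodPMF p n) hμ0 (fun ω => (fun j : Fin n => (ω j).1))
        (fun ω => ((fun j : Fin n => f (ω j)),
          (φX fun j => (ω j).1, φY (φ0 fun j => (ω j).1, fun j => (ω j).2))))
        (fun q => (q.1, q.2.1))
    have r4 : ent (prodPMF p n) (fun ω => ((fun j : Fin n => f (ω j)),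
          (φX fun j => (ω j).1, φY (φ0 fun j => (ω j).1, fun j => (ω j).2))))
        - ent (prodPMF p n) (fun ω => (φX fun j => (ω j).1,
          φY (φ0 fun j => (ω j).1, fun j => (ω j).2))) ≤ ε := hfano
    have hgoalsum : (∑ i : Fin n, (ent (prodPMF p n) (fun ω => f (ω i))
          + condMI (prodPMF p n) (fun ω => (ω i).1)
            (fun ω => ((fun j : {j : Fin n // i < j} => f (ω j.1)), φX fun j => (ω j).1))
            (fun ω => f (ω i))))
        = (∑ i : Fin n, ent (prodPMF p n) (fun ω => ((ω i).1, f (ω i))))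
          - ∑ i : Fin n,
            (ent (prodPMF p n) (fun ω => ((ω i).1,
              (((fun j : {j : Fin n // i < j} => f (ω j.1)), φX fun j => (ω j).1), f (ω i))))
            - ent (prodPMF p n) (fun ω => (((fun j : {j : Fin n // i < j} => f (ω j.1)),
                φX fun j => (ω j).1), f (ω i)))) := by
      rw [Finset.sum_congr rfl (fun i _ => hterm i)]
      rw [Finset.sum_sub_distrib]
    rw [ge_iff_le, hgoalsum]
    linarith [hsumA, hV2n, hV20, hWsum, hW0, hWn, r1, r2, r3, r4]
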